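/- Let v be an upper semicontinuous function on a complex manifold M that locally is a decreasing limit of C² functions v_n with (−1)^k (i∂∂̄ v_n)^k ≤ ε_n ω^k, ε_n → 0 (i.e. v ∈ P⁽ᵏ⁾₋(M)). Then v satisfies the local maximum principle: for every closed ball B ⊂ M, max over B of v equals max over ∂B of v. -/

import Mathlib

open Filter Metric

/-- The Laplacian of a function on `ℂ ≅ ℝ²`. -/
noncomputable def lapl (f : ℂ → ℝ) (z : ℂ) : ℝ :=
  fderiv ℝ (fun w => fderiv ℝ f w 1) z 1 +
    fderiv ℝ (fun w => fderiv ℝ f w Complex.I) z Complex.I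

/-- One-dimensional second derivative test at a local max. -/
lemma sd_test (g : ℝ → ℝ) (hg : ContDiff ℝ 2 g) (hmax : IsLocalMax g 0) :
    deriv (deriv g) 0 ≤ 0 := by
  by_contra hpos
  push_neg at hpos
  have hg1 : ContDiff ℝ 1 (deriv g) :=
    (contDiff_succ_iff_deriv.mp (show ContDiff ℝ (1+1) g by norm_num [hg])).2.2
  have hd0 : deriv g 0 = 0 := hmax.deriv_eq_zero
  have hder : HasDerivAt (deriv g) (deriv (deriv g) 0) 0 :=
    (hg1.differentiable one_ne_zero).differentiableAt.hasDerivAt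
  have hslope := hasDerivAt_iff_tendsto_slope.mp hder
  have hev : ∀ᶠ t in nhdsWithin 0 (Set.Ioi 0), 0 < deriv g t := by
    have h1 : ∀ᶠ t in nhdsWithin 0 (Set.Ioi 0), 0 < slope (deriv g) 0 t := by
      have : Tendsto (slope (deriv g) 0) (nhdsWithin 0 (Set.Ioi 0)) (nhds (deriv (deriv g) 0)) :=
        hslope.mono_left (nhdsWithin_mono 0 (by intro x hx; exact Set.mem_compl_singleton_iff.mpr (ne_of_gt hx)))
      exact this.eventually (eventually_gt_nhds hpos)
    filter_upwards [h1, self_mem_nhdsWithin] with t ht ht0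
    have hs : slope (deriv g) 0 t = deriv g t / t := by
      simp [slope, hd0, vsub_eq_sub, div_eq_inv_mul]
    rw [hs] at ht
    have htpos : (0:ℝ) < t := ht0
    nlinarith [div_mul_cancel₀ (deriv g t) (ne_of_gt htpos)]
  obtain ⟨δ, hδpos, hδ⟩ : ∃ δ > 0, ∀ t ∈ Set.Ioo (0:ℝ) δ, 0 < deriv g t := by
    rcases mem_nhdsGT_iff_exists_Ioo_subset.mp hev with ⟨u, hu, hsub⟩
    exact ⟨u, hu, fun t ht => hsub ht⟩
  obtain ⟨ρ, hρpos, hρ⟩ := Metric.eventually_nhds_iff.mp hmax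
  set t := min (δ/2) (ρ/2) with htdef
  have htpos : 0 < t := lt_min (by linarith) (by linarith)
  have hmono : StrictMonoOn g (Set.Icc 0 t) := by
    apply strictMonoOn_of_deriv_pos (convex_Icc 0 t) ((hg.continuous).continuousOn)
    intro x hx
    rw [interior_Icc] at hx
    exact hδ x ⟨hx.1, lt_of_lt_of_le hx.2 (le_trans (min_le_left _ _) (by linarith))⟩
  have h1 : g 0 < g t := hmono ⟨le_rfl, htpos.le⟩ ⟨htpos.le, le_rfl⟩ htpos
  have h2 : g t ≤ g 0 := by
    apply hρ
    simp only [dist_zero_right, Real.norm_eq_abs, abs_of_pos htpos]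
    exact lt_of_le_of_lt (min_le_right _ _) (by linarith)
  linarith

/-- Second directional derivative is nonpositive at a local max. -/
lemma dir2_nonpos (f : ℂ → ℝ) (hf : ContDiff ℝ 2 f) (s : Set ℂ) (x : ℂ) (hx : s ∈ nhds x)
    (hmax : ∀ z ∈ s, f z ≤ f x) (e : ℂ) :
    fderiv ℝ (fun w => fderiv ℝ f w e) x e ≤ 0 := by
  set L : ℝ → ℂ := fun t => x + t • e with hL
  have hL0 : L 0 = x := by simp [hL]
  have hLd : ∀ t, HasDerivAt L e t := by
    intro t
    have h := ((hasDerivAt_id t).smul_const e).const_add x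
    rw [one_smul] at h
    exact h
  have hLc : ContDiff ℝ 2 L := contDiff_const.add (contDiff_id.smul contDiff_const)
  set g : ℝ → ℝ := fun t => f (L t) with hg
  have hgc : ContDiff ℝ 2 g := hf.comp hLc
  have hfd : Differentiable ℝ f := hf.differentiable (by norm_num)
  set F : ℂ → ℝ := fun w => fderiv ℝ f w e with hF
  have hF1 : ContDiff ℝ 1 F := by
    have h1 : ContDiff ℝ 1 (fderiv ℝ f) :=
      (contDiff_succ_iff_fderiv.mp (show ContDiff ℝ (1+1) f by norm_num [hf])).2.2
    exact (ContinuousLinearMap.apply ℝ ℝ e).contDiff.comp h1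
  have hderg : ∀ t, HasDerivAt g (F (L t)) t := by
    intro t
    exact (hfd (L t)).hasFDerivAt.comp_hasDerivAt t (hLd t)
  have hgd : deriv g = fun t => F (L t) := funext fun t => (hderg t).deriv
  have hderg2 : HasDerivAt (deriv g) (fderiv ℝ F x e) 0 := by
    rw [hgd]
    have h := ((hF1.differentiable one_ne_zero) (L 0)).hasFDerivAt.comp_hasDerivAt 0 (hLd 0)
    rw [hL0] at h
    exact h
  have hlm : IsLocalMax g 0 := by
    have hc : ContinuousAt L 0 := hLc.continuous.continuousAt
    have : ∀ᶠ t in nhds (0:ℝ), L t ∈ s := hc.eventually_mem (by rwa [hL0])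
    filter_upwards [this] with t ht
    simpa [hg, hL0] using hmax (L t) ht
  have := sd_test g hgc hlm
  rw [hderg2.deriv] at this
  exact this

lemma lapl_nonpos (f : ℂ → ℝ) (hf : ContDiff ℝ 2 f) (s : Set ℂ) (x : ℂ) (hx : s ∈ nhds x)
    (hmax : ∀ z ∈ s, f z ≤ f x) : lapl f x ≤ 0 := by
  have h1 := dir2_nonpos f hf s x hx hmax 1
  have h2 := dir2_nonpos f hf s x hx hmax Complex.I
  unfold lapl; linarith

noncomputable def qd (z₀ : ℂ) (z : ℂ) : ℝ := (z.re - z₀.re)^2 + (z.im - z₀.im)^2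

lemma qd_contDiff (z₀ : ℂ) (c : ℝ) : ContDiff ℝ 2 (fun z => c * qd z₀ z) := by
  unfold qd
  exact contDiff_const.mul
    (((Complex.reCLM.contDiff.sub contDiff_const).pow 2).add
      ((Complex.imCLM.contDiff.sub contDiff_const).pow 2))

lemma qd_nonneg (z₀ z : ℂ) : 0 ≤ qd z₀ z := by unfold qd; positivity

lemma qd_sphere (z₀ : ℂ) (r : ℝ) (x : ℂ) (hx : x ∈ sphere z₀ r) : qd z₀ x = r^2 := by
  have hd : dist x z₀ = r := mem_sphere.mp hx
  have : qd z₀ x = ‖x - z₀‖ ^ 2 := by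
    rw [Complex.sq_norm, Complex.normSq_apply]
    unfold qd
    simp [Complex.sub_re, Complex.sub_im]
    ring
  rw [this, ← Complex.dist_eq, hd]

lemma cq_fderiv_apply (z₀ : ℂ) (c : ℝ) (w e : ℂ) :
    fderiv ℝ (fun z => c * qd z₀ z) w e
      = c * (2*(w.re - z₀.re)*e.re + 2*(w.im - z₀.im)*e.im) := by
  have hre := (Complex.reCLM.hasFDerivAt (x := w)).sub_const z₀.re
  have him := (Complex.imCLM.hasFDerivAt (x := w)).sub_const z₀.im
  have h := ((hre.mul hre).add (him.mul him)).const_mul c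
  have h2 : HasFDerivAt (fun z => c * qd z₀ z)
      (c • ((w.re - z₀.re) • Complex.reCLM + (w.re - z₀.re) • Complex.reCLM
        + ((w.im - z₀.im) • Complex.imCLM + (w.im - z₀.im) • Complex.imCLM))) w := by
    simpa [qd, pow_two] using h
  rw [h2.fderiv]
  simp
  ring

lemma cq_lapl (z₀ : ℂ) (c : ℝ) (x : ℂ) : lapl (fun z => c * qd z₀ z) x = 4*c := by
  have key : ∀ e : ℂ, fderiv ℝ (fun w => fderiv ℝ (fun z => c * qd z₀ z) w e) x e
      = c*(2*e.re^2 + 2*e.im^2) := by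
    intro e
    have hfun : (fun w => fderiv ℝ (fun z => c * qd z₀ z) w e)
        = fun w => ((c*(2*e.re)) * w.re + (c*(2*e.im)) * w.im
            + (-(c*(2*z₀.re*e.re)) + -(c*(2*z₀.im*e.im)))) := by
      funext w; rw [cq_fderiv_apply]; ring
    rw [hfun]
    have h1 : HasFDerivAt (fun w : ℂ => ((c*(2*e.re)) * w.re + (c*(2*e.im)) * w.im
            + (-(c*(2*z₀.re*e.re)) + -(c*(2*z₀.im*e.im)))))
        ((c*(2*e.re)) • Complex.reCLM + (c*(2*e.im)) • Complex.imCLM) x :=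
      ((Complex.reCLM.hasFDerivAt.const_mul _).add
        (Complex.imCLM.hasFDerivAt.const_mul _)).add_const _
    rw [h1.fderiv]
    simp
    ring
  unfold lapl
  rw [key 1, key Complex.I]
  simp
  ring

lemma fderiv_apply_contDiff (f : ℂ → ℝ) (hf : ContDiff ℝ 2 f) (e : ℂ) :
    ContDiff ℝ 1 (fun w => fderiv ℝ f w e) := by
  have h1 : ContDiff ℝ 1 (fderiv ℝ f) :=
    (contDiff_succ_iff_fderiv.mp (show ContDiff ℝ (1+1) f by norm_num [hf])).2.2
  exact (ContinuousLinearMap.apply ℝ ℝ e).contDiff.comp h1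

lemma lapl_add' (f g : ℂ → ℝ) (hf : ContDiff ℝ 2 f) (hg : ContDiff ℝ 2 g) (x : ℂ) :
    lapl (fun z => f z + g z) x = lapl f x + lapl g x := by
  have hfd := hf.differentiable (by norm_num)
  have hgd := hg.differentiable (by norm_num)
  have key : ∀ e : ℂ, fderiv ℝ (fun w => fderiv ℝ (fun z => f z + g z) w e) x e
      = fderiv ℝ (fun w => fderiv ℝ f w e) x e + fderiv ℝ (fun w => fderiv ℝ g w e) x e := by
    intro e
    have h1 : (fun w => fderiv ℝ (fun z => f z + g z) w e)
        = fun w => fderiv ℝ f w e + fderiv ℝ g w e := by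
      funext w
      rw [fderiv_fun_add (hfd w) (hgd w)]; simp
    rw [h1, fderiv_fun_add (((fderiv_apply_contDiff f hf e).differentiable one_ne_zero) x)
      (((fderiv_apply_contDiff g hg e).differentiable one_ne_zero) x)]
    simp
  unfold lapl
  rw [key 1, key Complex.I]
  ring

/-- Maximum principle with penalty: if `Δf ≥ -a` then `f + c·qd` attains its max on the sphere. -/
lemma lemB (f : ℂ → ℝ) (hf : ContDiff ℝ 2 f) (a : ℝ) (hl : ∀ z, -a ≤ lapl f z)
    (z₀ : ℂ) (r : ℝ) (hr : 0 < r) (c : ℝ) (hc : a/4 < c)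
    (z : ℂ) (hz : z ∈ closedBall z₀ r) :
    f z + c * qd z₀ z ≤ sSup (f '' sphere z₀ r) + c * r^2 := by
  set W : ℂ → ℝ := fun y => f y + c * qd z₀ y with hW
  have hWc : ContDiff ℝ 2 W := hf.add (qd_contDiff z₀ c)
  obtain ⟨x, hxmem, hxmax⟩ := (isCompact_closedBall z₀ r).exists_isMaxOn
    (nonempty_closedBall.mpr hr.le) (hWc.continuous.continuousOn)
  have hxsphere : x ∈ sphere z₀ r := by
    by_contra hxs
    have hxball : x ∈ ball z₀ r := by
      rw [mem_ball]
      rcases lt_or_eq_of_le (mem_closedBall.mp hxmem) with h | h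
      · exact h
      · exact absurd (mem_sphere.mpr h) hxs
    have h0 := lapl_nonpos W hWc (ball z₀ r) x (isOpen_ball.mem_nhds hxball)
      (fun y hy => hxmax (ball_subset_closedBall hy))
    rw [hW] at h0
    rw [lapl_add' f _ hf (qd_contDiff z₀ c), cq_lapl] at h0
    have := hl x
    linarith
  have hbdd : BddAbove (f '' sphere z₀ r) :=
    (isCompact_sphere z₀ r).bddAbove_image hf.continuous.continuousOn
  calc f z + c * qd z₀ z = W z := rfl
    _ ≤ W x := hxmax hz
    _ = f x + c * r^2 := by rw [hW]; simp [qd_sphere z₀ r x hxsphere]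
    _ ≤ sSup (f '' sphere z₀ r) + c * r^2 :=
        add_le_add_left (le_csSup hbdd (Set.mem_image_of_mem f hxsphere)) _

lemma lemC (f : ℂ → ℝ) (hf : ContDiff ℝ 2 f) (a : ℝ) (ha : 0 ≤ a) (hl : ∀ z, -a ≤ lapl f z)
    (z₀ : ℂ) (r : ℝ) (hr : 0 < r) (z : ℂ) (hz : z ∈ closedBall z₀ r) :
    f z ≤ sSup (f '' sphere z₀ r) + a * r^2 / 4 := by
  refine le_of_forall_gt_imp_ge_of_dense fun b hb => ?_
  set δ := b - (sSup (f '' sphere z₀ r) + a * r^2 / 4) with hδ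
  have hδpos : 0 < δ := by simp [hδ]; linarith
  have hc : a/4 < a/4 + δ/r^2 := by
    have := div_pos hδpos (pow_pos hr 2)
    linarith
  have hB := lemB f hf a hl z₀ r hr (a/4 + δ/r^2) hc z hz
  have hq := qd_nonneg z₀ z
  have hcpos : 0 ≤ a/4 + δ/r^2 := le_of_lt (lt_of_le_of_lt (by linarith) hc)
  have hr2 : (δ/r^2) * r^2 = δ := div_mul_cancel₀ δ (ne_of_gt (pow_pos hr 2))
  nlinarith [mul_nonneg hcpos hq]

/-- Proposition 6.10 (case `k = 1`, on `ℂ`): an upper semicontinuous function `v` which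
is a decreasing pointwise limit of `C²` functions `vₙ` with `Δvₙ ≥ −εₙ`, `εₙ → 0`
(i.e. `v ∈ P⁽¹⁾₋`), satisfies the local maximum principle: on every closed ball, the
supremum of `v` equals its supremum on the boundary sphere. -/
theorem stmt_9 (v : ℂ → ℝ) (hv : UpperSemicontinuous v)
    (vn : ℕ → ℂ → ℝ) (hC2 : ∀ n, ContDiff ℝ 2 (vn n))
    (hmono : ∀ z, Antitone fun n => vn n z)
    (hlim : ∀ z, Tendsto (fun n => vn n z) atTop (nhds (v z)))
    (ε : ℕ → ℝ) (hεpos : ∀ n, 0 ≤ ε n)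
    (hε0 : Tendsto ε atTop (nhds 0))
    (hsub : ∀ n z, -(ε n) ≤ lapl (vn n) z) :
    ∀ (z₀ : ℂ) (r : ℝ), 0 < r →
      sSup (v '' closedBall z₀ r) = sSup (v '' sphere z₀ r) := by
  intro z₀ r hr
  set S := sSup (v '' sphere z₀ r) with hS
  have hsne : (sphere z₀ r).Nonempty := NormedSpace.sphere_nonempty.mpr hr.le
  have hvle : ∀ n z, v z ≤ vn n z := fun n z =>
    le_of_tendsto (hlim z) (eventually_atTop.2 ⟨n, fun m hm => hmono z hm⟩)
  have hSbdd : BddAbove (v '' sphere z₀ r) := by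
    obtain ⟨C, hC⟩ := (isCompact_sphere z₀ r).bddAbove_image ((hC2 0).continuous.continuousOn)
    exact ⟨C, by
      rintro _ ⟨y, hy, rfl⟩
      exact le_trans (hvle 0 y) (hC (Set.mem_image_of_mem _ hy))⟩
  have hvS : ∀ y ∈ sphere z₀ r, v y ≤ S := fun y hy => le_csSup hSbdd (Set.mem_image_of_mem _ hy)
  have claim : ∀ z ∈ closedBall z₀ r, v z ≤ S := by
    intro z hz
    refine le_of_forall_gt_imp_ge_of_dense fun b hb => ?_
    set η := b - S with hη
    have hηpos : 0 < η := by simp [hη]; linarith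
    set K : ℕ → Set ℂ := fun n => sphere z₀ r ∩ {y | S + η/2 ≤ vn n y} with hK
    have hKclosed : ∀ n, IsClosed (K n) := fun n =>
      isClosed_sphere.inter (isClosed_le continuous_const (hC2 n).continuous)
    have hKsub : ∀ n, K (n+1) ⊆ K n := fun n y hy =>
      ⟨hy.1, le_trans hy.2 (hmono y (Nat.le_succ n))⟩
    have hKempty : ∃ N, K N = ∅ := by
      by_contra hne
      push_neg at hne
      have hnon : ∀ n, (K n).Nonempty := hne
      have hcpt : IsCompact (K 0) :=
        (isCompact_sphere z₀ r).inter_right (isClosed_le continuous_const (hC2 0).continuous)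
      obtain ⟨y, hy⟩ := IsCompact.nonempty_iInter_of_sequence_nonempty_isCompact_isClosed
        K hKsub hnon hcpt hKclosed
      have hy' := Set.mem_iInter.mp hy
      have h1 : S + η/2 ≤ v y :=
        ge_of_tendsto (hlim y) (Eventually.of_forall fun n => (hy' n).2)
      have h2 : v y ≤ S := hvS y (hy' 0).1
      linarith
    obtain ⟨N, hN⟩ := hKempty
    have hev : ∀ᶠ m in atTop, ε m * r^2 / 4 < η/2 := by
      have hpos : (0:ℝ) < 2*η/r^2 := by positivity
      filter_upwards [hε0.eventually (eventually_lt_nhds hpos)] with m hm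
      have h1 : ε m * r^2 < 2*η/r^2 * r^2 := by
        exact mul_lt_mul_of_pos_right hm (pow_pos hr 2)
      have h2 : 2*η/r^2 * r^2 = 2*η := div_mul_cancel₀ _ (ne_of_gt (pow_pos hr 2))
      linarith
    obtain ⟨m, hm1, hm2⟩ := (hev.and (eventually_ge_atTop N)).exists
    have hsup : ∀ y ∈ sphere z₀ r, vn m y ≤ S + η/2 := by
      intro y hy
      have hnot : y ∉ K N := by rw [hN]; exact Set.notMem_empty y
      have hlt : vn N y < S + η/2 := by
        by_contra hge
        exact hnot ⟨hy, le_of_not_gt hge⟩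
      exact le_trans (hmono y hm2) hlt.le
    have hsups : sSup (vn m '' sphere z₀ r) ≤ S + η/2 :=
      csSup_le (hsne.image _) (by rintro _ ⟨y, hy, rfl⟩; exact hsup y hy)
    have hC := lemC (vn m) (hC2 m) (ε m) (hεpos m) (hsub m) z₀ r hr z hz
    have := hvle m z
    have : v z ≤ S + η/2 + η/2 := by linarith
    linarith
  apply le_antisymm
  · exact csSup_le ((nonempty_closedBall.mpr hr.le).image v)
      (by rintro _ ⟨y, hy, rfl⟩; exact claim y hy)
  · exact csSup_le_csSup ⟨S, by rintro _ ⟨y, hy, rfl⟩; exact claim y hy⟩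
      (hsne.image v) (Set.image_mono sphere_subset_closedBall)
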